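/- Let K be a commutative ring, let Γ be a finitely generated torsion-free abelian group, and let φ : Γ → ℝ be a group homomorphism. Then there is a ring isomorphism Λ^K_φ(Γ) ≅ Λ^{K[ker φ]}(φ(Γ)), where the right-hand side is the Novikov ring over the subgroup φ(Γ) ≤ ℝ with coefficients in the group algebra K[ker φ]. -/

import Mathlib

/-- The underlying set of the Novikov ring with coefficients in `K`, over an index
type `Γ` weighted by `w : Γ → ℝ`: functions `r : Γ → K` such that for every `c : ℝ`
only finitely many `γ` with `w γ < c` have `r γ ≠ 0`.  Taking `w = φ` for a group
homomorphism `φ : Γ → ℝ` gives `Λ^K_φ(Γ)`; taking `Γ` an additive subgroup of `ℝ`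
and `w` the inclusion gives `Λ^K(Γ)`. -/
def NovikovSet (K : Type*) [Zero K] {Γ : Type*} (w : Γ → ℝ) : Set (Γ → K) :=
  {r | ∀ c : ℝ, {γ : Γ | r γ ≠ 0 ∧ w γ < c}.Finite}

/-- The older Mathlib's `AddMonoid.IsTorsionFree`, restated with its old meaning. -/
def AddMonoid.IsTorsionFree (G : Type*) [AddMonoid G] : Prop :=
  ∀ g : G, g ≠ 0 → ¬IsOfFinAddOrder g

/-- A commutative ring structure on a set `S` of functions `Γ → K` is a Novikov ring
structure if addition is pointwise and multiplication is the convolution product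
`(r·s)(γ) = Σ_{α+β=γ} r(α)s(β)`. -/
def IsNovikovRingStructure {K Γ : Type*} [CommRing K] [AddCommGroup Γ]
    (S : Set (Γ → K)) [CommRing ↥S] : Prop :=
  (∀ a b : ↥S, ∀ γ : Γ, ((a + b : ↥S) : Γ → K) γ = a.1 γ + b.1 γ) ∧
  (∀ a b : ↥S, ∀ γ : Γ, ((a * b : ↥S) : Γ → K) γ = ∑ᶠ α : Γ, a.1 α * b.1 (γ - α))

open Function

namespace NovikovProofAux

lemma amul_apply_finsum {K A : Type*} [CommRing K] [AddCommGroup A]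
    (f g : AddMonoidAlgebra K A) (x : A) :
    (f * g).coeff x = ∑ᶠ l : A, f.coeff l * g.coeff (x - l) := by
  classical
  rw [AddMonoidAlgebra.coeff_mul]
  have h1 : ∀ a1 : A, (∑ a2 ∈ g.coeff.support, if a1 + a2 = x then f.coeff a1 * g.coeff a2 else 0)
      = f.coeff a1 * g.coeff (x - a1) := by
    intro a1
    have : ∀ a2 : A, (a1 + a2 = x) ↔ (a2 = x - a1) := by
      intro a2; constructor
      · intro h; rw [← h]; abel
      · intro h; rw [h]; abel
    simp only [this]
    rw [Finset.sum_ite_eq' g.coeff.support (x - a1) (fun a2 => f.coeff a1 * g.coeff a2)]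
    by_cases h : x - a1 ∈ g.coeff.support
    · simp [h]
    · simp [h, Finsupp.notMem_support_iff.mp h]
  simp only [Finsupp.sum]
  rw [Finset.sum_congr rfl (fun a1 _ => h1 a1)]
  refine (finsum_eq_sum_of_support_subset _ ?_).symm
  intro a1 ha1
  simp only [Function.mem_support] at ha1
  simp only [Finset.mem_coe, Finsupp.mem_support_iff]
  intro h; rw [h, zero_mul] at ha1; exact ha1 rfl

lemma finsum_prod_eq {M ι κ : Type*} [AddCommMonoid M] {f : ι × κ → M}
    (hf : (Function.support f).Finite) :
    ∑ᶠ p : ι × κ, f p = ∑ᶠ j : κ, ∑ᶠ i : ι, f (i, j) := by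
  classical
  set s := hf.toFinset with hs
  set s₁ := s.image Prod.fst
  set s₂ := s.image Prod.snd
  have hsub : Function.support f ⊆ ↑(s₁ ×ˢ s₂) := by
    intro p hp
    have hps : p ∈ s := hf.mem_toFinset.mpr hp
    simp only [Finset.coe_product, Set.mem_prod, Finset.mem_coe]
    exact ⟨Finset.mem_image.mpr ⟨p, hps, rfl⟩, Finset.mem_image.mpr ⟨p, hps, rfl⟩⟩
  rw [finsum_eq_sum_of_support_subset _ hsub]
  have inner : ∀ j : κ, ∑ᶠ i : ι, f (i, j) = ∑ i ∈ s₁, f (i, j) := by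
    intro j
    refine finsum_eq_sum_of_support_subset _ ?_
    intro i hi
    have : (i, j) ∈ Function.support f := hi
    have := hsub this
    simp only [Finset.coe_product, Set.mem_prod, Finset.mem_coe] at this
    exact this.1
  have outer : ∑ᶠ j : κ, ∑ᶠ i : ι, f (i, j) = ∑ j ∈ s₂, ∑ᶠ i : ι, f (i, j) := by
    refine finsum_eq_sum_of_support_subset _ ?_
    intro j hj
    simp only [Function.mem_support] at hj
    by_contra hjs
    apply hj
    rw [inner j]
    refine Finset.sum_eq_zero fun i _ => ?_
    by_contra hne
    have := hsub (by exact hne : (i, j) ∈ Function.support f)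
    simp only [Finset.coe_product, Set.mem_prod, Finset.mem_coe] at this
    exact hjs this.2
  rw [outer, Finset.sum_product_right]
  exact Finset.sum_congr rfl fun j _ => (inner j).symm

lemma exists_novikov_section {Γ : Type*} [AddCommGroup Γ] [AddGroup.FG Γ] (φ : Γ →+ ℝ) :
    ∃ σ : ↥φ.range →+ Γ, ∀ a : ↥φ.range, φ (σ a) = (a : ℝ) := by
  haveI : Module.Finite ℤ Γ := Module.Finite.iff_addGroup_fg.mpr ‹_›
  haveI : Module.Finite ℤ ↥φ.range :=
    Module.Finite.of_surjective (φ.rangeRestrict.toIntLinearMap) φ.rangeRestrict_surjective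
  haveI : NoZeroSMulDivisors ℤ ↥φ.range := by
    constructor
    intro n x h
    have h' : ((n • x : ↥φ.range) : ℝ) = 0 := by rw [h]; rfl
    rw [AddSubgroupClass.coe_zsmul, zsmul_eq_mul] at h'
    rcases mul_eq_zero.mp h' with h'' | h''
    · exact Or.inl (by exact_mod_cast h'')
    · exact Or.inr (by ext; exact h'')
  obtain ⟨h, hh⟩ := Module.projective_lifting_property
    (φ.rangeRestrict.toIntLinearMap) (LinearMap.id) φ.rangeRestrict_surjective
  refine ⟨h.toAddMonoidHom, fun a => ?_⟩
  have h2 := LinearMap.ext_iff.mp hh a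
  simp only [LinearMap.comp_apply, LinearMap.id_apply] at h2
  have h3 : (φ.rangeRestrict (h a) : ℝ) = (a : ℝ) := congrArg Subtype.val h2
  rw [φ.coe_rangeRestrict] at h3
  exact h3

lemma conv_support_finite {K A : Type*} [MulZeroClass K] [AddCommGroup A] {w : A → ℝ}
    (hw : ∀ x y : A, w (x - y) = w x - w y) {r s : A → K}
    (hr : r ∈ NovikovSet K w) (hs : s ∈ NovikovSet K w) (γ : A) :
    {α : A | r α ≠ 0 ∧ s (γ - α) ≠ 0}.Finite := by
  apply Set.Finite.subset ((hr 1).union ((hs (w γ)).image (fun β => γ - β)))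
  rintro α ⟨hra, hsa⟩
  by_cases h1 : w α < 1
  · exact Or.inl ⟨hra, h1⟩
  · refine Or.inr ⟨γ - α, ⟨hsa, ?_⟩, sub_sub_cancel γ α⟩
    rw [hw]; linarith

section Main

variable {K : Type*} [CommRing K] {Γ : Type*} [AddCommGroup Γ]
  (φ : Γ →+ ℝ) (σ : ↥φ.range →+ Γ)

variable (hσ : ∀ a : ↥φ.range, φ (σ a) = (a : ℝ))

include hσ

lemma phi_eps (k : ↥φ.ker) (a : ↥φ.range) : φ ((k : Γ) + σ a) = (a : ℝ) := by
  rw [map_add, hσ, AddMonoidHom.mem_ker.mp k.2, zero_add]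

lemma pi_eps (k : ↥φ.ker) (a : ↥φ.range) : φ.rangeRestrict ((k : Γ) + σ a) = a :=
  Subtype.ext (by rw [φ.coe_rangeRestrict, phi_eps φ σ hσ])

def kpart (γ : Γ) : ↥φ.ker :=
  ⟨γ - σ (φ.rangeRestrict γ), by
    rw [AddMonoidHom.mem_ker, map_sub, hσ, φ.coe_rangeRestrict, sub_self]⟩

lemma eps_recon (γ : Γ) : ((kpart φ σ hσ γ : Γ)) + σ (φ.rangeRestrict γ) = γ := by
  simp [kpart]

lemma kpart_eps (k : ↥φ.ker) (a : ↥φ.range) : kpart φ σ hσ ((k : Γ) + σ a) = k := by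
  apply Subtype.ext
  simp only [kpart, pi_eps φ σ hσ]
  abel

/-- The additive equivalence `ker × range ≃ Γ`. -/
def eps : ↥φ.ker × ↥φ.range ≃ Γ where
  toFun p := (p.1 : Γ) + σ p.2
  invFun γ := (kpart φ σ hσ γ, φ.rangeRestrict γ)
  left_inv p := Prod.ext (kpart_eps φ σ hσ p.1 p.2) (pi_eps φ σ hσ p.1 p.2)
  right_inv γ := eps_recon φ σ hσ γ

noncomputable def fwdAux (r : Γ → K) (hr : r ∈ NovikovSet K ⇑φ) (a : ↥φ.range) :
    AddMonoidAlgebra K ↥φ.ker :=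
  AddMonoidAlgebra.ofCoeff (Finsupp.ofSupportFinite (fun k : ↥φ.ker => r ((k : Γ) + σ a)) (by
    apply Set.Finite.subset (((hr ((a : ℝ) + 1)).preimage
      (Set.injOn_of_injective (f := fun k : ↥φ.ker => (k : Γ) + σ a)
        (fun k₁ k₂ h => by
          have := congrArg (kpart φ σ hσ) h
          rwa [kpart_eps φ σ hσ, kpart_eps φ σ hσ] at this))))
    intro k hk
    simp only [Function.mem_support] at hk
    exact ⟨hk, by rw [phi_eps φ σ hσ]; linarith⟩))

@[simp] lemma fwdAux_apply (r : Γ → K) (hr : r ∈ NovikovSet K ⇑φ) (a : ↥φ.range) (k : ↥φ.ker) :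
    (fwdAux φ σ hσ r hr a).coeff k = r ((k : Γ) + σ a) := by
  simp [fwdAux, Finsupp.ofSupportFinite_coe, AddMonoidAlgebra.coeff_ofCoeff]

lemma fwd_mem (r : Γ → K) (hr : r ∈ NovikovSet K ⇑φ) :
    (fun a => fwdAux φ σ hσ r hr a)
      ∈ NovikovSet (AddMonoidAlgebra K ↥φ.ker) (fun a : ↥φ.range => (a : ℝ)) := by
  intro c
  apply Set.Finite.subset ((hr c).image φ.rangeRestrict)
  rintro a ⟨hne, hlt⟩
  obtain ⟨k, hk⟩ : ∃ k, (fwdAux φ σ hσ r hr a).coeff k ≠ 0 := by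
    by_contra h
    push_neg at h
    exact hne (AddMonoidAlgebra.ext (Finsupp.ext fun k => h k))
  rw [fwdAux_apply] at hk
  exact ⟨(k : Γ) + σ a, ⟨hk, by rw [phi_eps φ σ hσ]; exact hlt⟩, pi_eps φ σ hσ k a⟩

def bwdAux (R : ↥φ.range → AddMonoidAlgebra K ↥φ.ker) (γ : Γ) : K :=
  (R (φ.rangeRestrict γ)).coeff (kpart φ σ hσ γ)

lemma bwd_mem (R : ↥φ.range → AddMonoidAlgebra K ↥φ.ker)
    (hR : R ∈ NovikovSet (AddMonoidAlgebra K ↥φ.ker) (fun a : ↥φ.range => (a : ℝ))) :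
    bwdAux φ σ hσ R ∈ NovikovSet K ⇑φ := by
  intro c
  have hP : {p : ↥φ.ker × ↥φ.range | (R p.2).coeff p.1 ≠ 0 ∧ (p.2 : ℝ) < c}.Finite := by
    apply Set.Finite.subset (Set.Finite.biUnion (hR c)
      (fun b _ => (((R b).coeff.support : Set ↥φ.ker).toFinite.prod (Set.finite_singleton b))))
    rintro ⟨k, b⟩ ⟨hne, hlt⟩
    exact Set.mem_biUnion ⟨fun h => hne (by simp [h]), hlt⟩
      ⟨Finsupp.mem_support_iff.mpr hne, rfl⟩
  apply Set.Finite.subset (hP.image (eps φ σ hσ))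
  rintro γ ⟨hne, hlt⟩
  refine ⟨(kpart φ σ hσ γ, φ.rangeRestrict γ), ⟨hne, ?_⟩, eps_recon φ σ hσ γ⟩
  rw [φ.coe_rangeRestrict]; exact hlt

lemma bwd_fwd (r : Γ → K) (hr : r ∈ NovikovSet K ⇑φ) :
    bwdAux φ σ hσ (fun a => fwdAux φ σ hσ r hr a) = r := by
  funext γ
  rw [bwdAux, fwdAux_apply, eps_recon φ σ hσ]

lemma fwd_bwd (R : ↥φ.range → AddMonoidAlgebra K ↥φ.ker)
    (h : bwdAux φ σ hσ R ∈ NovikovSet K ⇑φ) (a : ↥φ.range) :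
    fwdAux φ σ hσ (bwdAux φ σ hσ R) h a = R a := by
  apply AddMonoidAlgebra.ext; apply Finsupp.ext
  intro k
  rw [fwdAux_apply, bwdAux, pi_eps φ σ hσ, kpart_eps φ σ hσ]

lemma key_mul (r s : Γ → K) (hr : r ∈ NovikovSet K ⇑φ) (hs : s ∈ NovikovSet K ⇑φ)
    (a : ↥φ.range) (k : ↥φ.ker) :
    (∑ᶠ α : Γ, r α * s (((k : Γ) + σ a) - α))
      = ∑ᶠ b : ↥φ.range, (fwdAux φ σ hσ r hr b * fwdAux φ σ hσ s hs (a - b)).coeff k := by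
  set γ : Γ := (k : Γ) + σ a with hγ
  set g : Γ → K := fun α => r α * s (γ - α) with hg
  have hgfin : (Function.support g).Finite := by
    apply Set.Finite.subset (conv_support_finite (fun x y => map_sub φ x y) hr hs γ)
    intro α hα
    simp only [Function.mem_support, hg] at hα
    exact ⟨fun h => hα (by rw [h, zero_mul]), fun h => hα (by rw [h, mul_zero])⟩
  have step1 : ∑ᶠ α : Γ, g α = ∑ᶠ p : ↥φ.ker × ↥φ.range, g (eps φ σ hσ p) :=
    (finsum_comp_equiv (eps φ σ hσ)).symm
  have step2 : ∑ᶠ p : ↥φ.ker × ↥φ.range, g (eps φ σ hσ p)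
      = ∑ᶠ b : ↥φ.range, ∑ᶠ l : ↥φ.ker, g (eps φ σ hσ (l, b)) := by
    apply finsum_prod_eq
    have : Function.support (fun p : ↥φ.ker × ↥φ.range => g (eps φ σ hσ p))
        = (eps φ σ hσ) ⁻¹' (Function.support g) := rfl
    rw [this]
    exact hgfin.preimage (Set.injOn_of_injective (eps φ σ hσ).injective)
  have step3 : ∀ (b : ↥φ.range) (l : ↥φ.ker),
      g (eps φ σ hσ (l, b)) = (fwdAux φ σ hσ r hr b).coeff l * (fwdAux φ σ hσ s hs (a - b)).coeff (k - l) := by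
    intro b l
    rw [fwdAux_apply, fwdAux_apply]
    have harg : ((k - l : ↥φ.ker) : Γ) + σ (a - b) = γ - ((l : Γ) + σ b) := by
      push_cast
      rw [map_sub, hγ]
      abel
    simp only [hg, eps, Equiv.coe_fn_mk, harg]
  have step4 : ∀ b : ↥φ.range,
      (fwdAux φ σ hσ r hr b * fwdAux φ σ hσ s hs (a - b)).coeff k
        = ∑ᶠ l : ↥φ.ker, (fwdAux φ σ hσ r hr b).coeff l * (fwdAux φ σ hσ s hs (a - b)).coeff (k - l) :=
    fun b => amul_apply_finsum _ _ k
  rw [step1, step2]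
  exact finsum_congr fun b => by rw [step4 b]; exact finsum_congr fun l => step3 b l

end Main
end NovikovProofAux

/-- Let `K` be a commutative ring, `Γ` a finitely generated torsion-free abelian
group and `φ : Γ → ℝ` a group homomorphism.  Then there is a ring isomorphism
`Λ^K_φ(Γ) ≅ Λ^{K[ker φ]}(φ(Γ))`, where the right-hand side is the Novikov ring over
the subgroup `φ(Γ) ≤ ℝ` with coefficients in the group algebra `K[ker φ]`. -/
theorem novikovRing_iso_novikovRing_groupAlgebra_ker
    (K : Type*) [CommRing K]
    (Γ : Type*) [AddCommGroup Γ] [AddGroup.FG Γ] (hTF : AddMonoid.IsTorsionFree Γ)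
    (φ : Γ →+ ℝ)
    [CommRing ↥(NovikovSet K ⇑φ)]
    (h₁ : IsNovikovRingStructure (NovikovSet K ⇑φ))
    [CommRing ↥(NovikovSet (AddMonoidAlgebra K φ.ker) (fun a : φ.range => (a : ℝ)))]
    (h₂ : IsNovikovRingStructure
      (NovikovSet (AddMonoidAlgebra K φ.ker) (fun a : φ.range => (a : ℝ)))) :
    Nonempty
      (↥(NovikovSet K ⇑φ) ≃+*
        ↥(NovikovSet (AddMonoidAlgebra K φ.ker) (fun a : φ.range => (a : ℝ)))) := by
  classical
  open NovikovProofAux in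
  obtain ⟨σ, hσ⟩ := NovikovProofAux.exists_novikov_section φ
  refine ⟨{
    toFun := fun r => ⟨fun a => fwdAux φ σ hσ r.1 r.2 a, fwd_mem φ σ hσ r.1 r.2⟩
    invFun := fun R => ⟨bwdAux φ σ hσ R.1, bwd_mem φ σ hσ R.1 R.2⟩
    left_inv := fun r => Subtype.ext (bwd_fwd φ σ hσ r.1 r.2)
    right_inv := fun R => Subtype.ext (funext fun a => fwd_bwd φ σ hσ R.1 (bwd_mem φ σ hσ R.1 R.2) a)
    map_add' := ?_
    map_mul' := ?_ }⟩
  case refine_2 =>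
    rintro ⟨x, hx⟩ ⟨y, hy⟩
    apply Subtype.ext
    funext a
    dsimp only
    rw [h₂.1 ⟨fun a => fwdAux φ σ hσ x hx a, fwd_mem φ σ hσ x hx⟩
          ⟨fun a => fwdAux φ σ hσ y hy a, fwd_mem φ σ hσ y hy⟩ a]
    apply AddMonoidAlgebra.ext; apply Finsupp.ext; intro k
    rw [AddMonoidAlgebra.coeff_add, Finsupp.add_apply, fwdAux_apply, fwdAux_apply, fwdAux_apply]
    exact h₁.1 ⟨x, hx⟩ ⟨y, hy⟩ _
  case refine_1 =>
    rintro ⟨x, hx⟩ ⟨y, hy⟩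
    apply Subtype.ext
    funext a
    dsimp only
    rw [h₂.2 ⟨fun a => fwdAux φ σ hσ x hx a, fwd_mem φ σ hσ x hx⟩
          ⟨fun a => fwdAux φ σ hσ y hy a, fwd_mem φ σ hσ y hy⟩ a]
    apply AddMonoidAlgebra.ext; apply Finsupp.ext; intro k
    have hfin : (Function.support
        (fun b => fwdAux φ σ hσ x hx b * fwdAux φ σ hσ y hy (a - b))).Finite := by
      apply Set.Finite.subset (conv_support_finite
        (w := fun a : ↥φ.range => (a : ℝ)) (fun u v => by push_cast; ring)
        (fwd_mem φ σ hσ x hx) (fwd_mem φ σ hσ y hy) a)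
      intro b hb
      simp only [Function.mem_support] at hb
      exact ⟨fun h => hb (by rw [h, zero_mul]), fun h => hb (by rw [h, mul_zero])⟩
    have hmap := (AddMonoidHom.mk' (fun f : AddMonoidAlgebra K ↥φ.ker => f.coeff k)
      (fun _ _ => rfl)).map_finsum hfin
    rw [fwdAux_apply, h₁.2 ⟨x, hx⟩ ⟨y, hy⟩ ((k : Γ) + σ a),
      key_mul φ σ hσ x y hx hy a k]
    exact hmap.symm
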